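/- arXiv:2508.05455 — 3 statements merged into one kernel-verified Lean document; each statement's English description precedes it below -/
import Mathlib

section
/- Let R be a ring. Then R is the union of 3 proper right ideals but not the union of 2 proper right ideals if and only if there exists a two-sided ideal I of R such that the quotient ring R/I has exactly 4 elements, x + x = 0 for every x ∈ R/I, and either (i) x·y = 0 for all x, y ∈ R/I, or (ii) R/I contains elements a, b additively generating R/I with a² = a, b² = b, ab = a, ba = b. -/
/-- A left ideal of a (possibly non-unital, non-commutative) ring `R`:
an additive subgroup closed under left multiplication by arbitrary ring elements. -/
def IsLeftIdeal {R : Type*} [NonUnitalRing R] (I : AddSubgroup R) : Prop :=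
  ∀ (r : R) ⦃x : R⦄, x ∈ I → r * x ∈ I

/-- A right ideal of a (possibly non-unital, non-commutative) ring `R`:
an additive subgroup closed under right multiplication by arbitrary ring elements. -/
def IsRightIdeal {R : Type*} [NonUnitalRing R] (I : AddSubgroup R) : Prop :=
  ∀ (r : R) ⦃x : R⦄, x ∈ I → x * r ∈ I

/-- A two-sided ideal: both a left and a right ideal. -/
def IsTwoSidedIdeal {R : Type*} [NonUnitalRing R] (I : AddSubgroup R) : Prop :=
  IsLeftIdeal I ∧ IsRightIdeal I

def pairSub {Q : Type*} [AddGroup Q] (w : Q) (hw : w + w = 0) : AddSubgroup Q where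
  carrier := {0, w}
  zero_mem' := Or.inl rfl
  add_mem' := by
    rintro x y (rfl | rfl) (rfl | rfl)
    · exact Or.inl (zero_add 0)
    · exact Or.inr (zero_add _)
    · exact Or.inr (add_zero _)
    · exact Or.inl hw
  neg_mem' := by
    rintro x (rfl | rfl)
    · exact Or.inl neg_zero
    · exact Or.inr (neg_eq_of_add_eq_zero_left hw)

lemma mem_pairSub {Q : Type*} [AddGroup Q] {w : Q} {hw : w + w = 0} {x : Q} :
    x ∈ pairSub w hw ↔ x = 0 ∨ x = w := Iff.rfl

lemma reverseDir (R : Type*) [NonUnitalRing R] (I : TwoSidedIdeal R)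
    (hcard : Nat.card I.ringCon.Quotient = 4)
    (hchar : ∀ x : I.ringCon.Quotient, x + x = 0)
    (hmul : (∀ x y : I.ringCon.Quotient, x * y = 0) ∨
        ∃ a b : I.ringCon.Quotient, AddSubgroup.closure {a, b} = ⊤ ∧
          a * a = a ∧ b * b = b ∧ a * b = a ∧ b * a = b) :
    ∃ f : Fin 3 → AddSubgroup R,
        (∀ i, IsRightIdeal (f i) ∧ f i ≠ ⊤) ∧ ∀ x : R, ∃ i, x ∈ f i := by
  classical
  set Q := I.ringCon.Quotient with hQ
  have hQfin : Finite Q := Nat.finite_of_card_ne_zero (by rw [hcard]; norm_num)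
  have hsurj : ∀ q : Q, ∃ x : R, (x : Q) = q := fun q => q.exists_rep
  -- the additive quotient map
  let π : R →+ Q := AddMonoidHom.mk' (fun x => (x : Q)) (fun x y => rfl)
  have hπ : ∀ x : R, π x = (x : Q) := fun _ => rfl
  have hπmul : ∀ x y : R, ((x * y : R) : Q) = (x : Q) * (y : Q) := fun _ _ => rfl
  -- any 2-element candidate subgroup is proper when pulled back
  have hbig : ∀ w : Q, ∃ q : Q, q ∉ ({0, w} : Set Q) := by
    intro w
    by_contra h
    push_neg at h
    have hsub : (Set.univ : Set Q) ⊆ {0, w} := fun q _ => h q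
    have h1 := Set.ncard_le_ncard hsub (Set.toFinite _)
    rw [Set.ncard_univ, hcard] at h1
    have h2 : ({0, w} : Set Q).ncard ≤ 2 := by
      refine le_trans (Set.ncard_insert_le _ _) ?_
      simp
    omega
  have hproper : ∀ (w : Q) (hw : w + w = 0), (pairSub w hw).comap π ≠ ⊤ := by
    intro w hw htop
    obtain ⟨q, hq⟩ := hbig w
    obtain ⟨x, rfl⟩ := hsurj q
    have hx : x ∈ (pairSub w hw).comap π := htop ▸ AddSubgroup.mem_top x
    exact hq (AddSubgroup.mem_comap.mp hx)
  rcases hmul with hzero | ⟨a, b, hcl, haa, hbb, hab, hba⟩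
  · -- zero multiplication case
    have : Nontrivial Q := (by haveI := hQfin; exact Finite.one_lt_card_iff_nontrivial.mp (by rw [hcard]; norm_num))
    obtain ⟨u, hu⟩ := exists_ne (0 : Q)
    obtain ⟨v, hv⟩ := hbig u
    simp only [Set.mem_insert_iff, Set.mem_singleton_iff, not_or] at hv
    obtain ⟨hv0, hvu⟩ := hv
    have huv0 : u + v ≠ 0 := by
      intro h
      exact hvu ((neg_eq_of_add_eq_zero_right h).symm.trans (neg_eq_of_add_eq_zero_left (hchar u)))
    have key : ∀ q : Q, q = 0 ∨ q = u ∨ q = v ∨ q = u + v := by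
      intro q
      by_contra h
      push_neg at h
      obtain ⟨h0, h1, h2, h3⟩ := h
      have hS : ({0, u, v, u + v} : Set Q) ⊆ Set.univ := Set.subset_univ _
      have hd1 : u ≠ 0 := hu
      have hd2 : v ≠ 0 := hv0
      have hd3 : u + v ≠ u := fun hh => hv0 (by rwa [add_eq_left] at hh)
      have hd4 : u + v ≠ v := fun hh => hu (by rwa [add_eq_right] at hh)
      have hSn : ({0, u, v, u + v} : Set Q).ncard = 4 := by
        rw [Set.ncard_insert_of_notMem (by simp [hd1.symm, hd2.symm, Ne.symm huv0])
            (Set.toFinite _),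
          Set.ncard_insert_of_notMem (by simp [Ne.symm hvu, Ne.symm hd3]) (Set.toFinite _),
          Set.ncard_pair (Ne.symm hd4)]
      have := Set.eq_of_subset_of_ncard_le hS (by rw [Set.ncard_univ, hcard, hSn]) Set.finite_univ
      have hqmem : q ∈ ({0, u, v, u + v} : Set Q) := this ▸ Set.mem_univ q
      simp only [Set.mem_insert_iff, Set.mem_singleton_iff] at hqmem
      tauto
    have hu2 : u + u = 0 := hchar u
    have hv2 : v + v = 0 := hchar v
    have huv2 : (u + v) + (u + v) = 0 := hchar _
    refine ⟨![(pairSub u hu2).comap π, (pairSub v hv2).comap π, (pairSub (u+v) huv2).comap π],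
      ?_, ?_⟩
    · intro i
      fin_cases i <;>
        refine ⟨fun r x hx => ?_, hproper _ _⟩ <;>
        · show ((x * r : R) : Q) = 0 ∨ _
          rw [hπmul]
          exact Or.inl (hzero _ _)
    · intro x
      rcases key (x : Q) with h | h | h | h
      · exact ⟨0, Or.inl h⟩
      · exact ⟨0, Or.inr h⟩
      · exact ⟨1, Or.inr h⟩
      · exact ⟨2, Or.inr h⟩
  · -- idempotent case
    have hneg : ∀ q : Q, -q = q := fun q => neg_eq_of_add_eq_zero_left (hchar q)
    have e1 : a + (a + b) = b := by rw [← add_assoc, hchar, zero_add]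
    have e2 : b + a = a + b := add_comm b a
    have e3 : b + (a + b) = a := by rw [add_comm a b, ← add_assoc, hchar, zero_add]
    have e4 : (a + b) + a = b := by rw [add_comm, e1]
    have e5 : (a + b) + b = a := by rw [add_comm, e3]
    have key : ∀ q : Q, q = 0 ∨ q = a ∨ q = b ∨ q = a + b := by
      intro q
      have hq : q ∈ AddSubgroup.closure ({a, b} : Set Q) := hcl ▸ AddSubgroup.mem_top q
      induction hq using AddSubgroup.closure_induction with
      | mem x hx => rcases hx with rfl | rfl
                    · exact Or.inr (Or.inl rfl)
                    · exact Or.inr (Or.inr (Or.inl rfl))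
      | zero => exact Or.inl rfl
      | add x y hx hy ihx ihy =>
          rcases ihx with rfl | rfl | rfl | rfl <;> rcases ihy with rfl | rfl | rfl | rfl <;>
            simp [hchar, e1, e2, e3, e4, e5]
      | neg x hx ih => rw [hneg]; exact ih
    -- multiplication table
    have tab : ∀ w : Q, (w = a ∨ w = b ∨ w = a + b) → ∀ q : Q, w * q = 0 ∨ w * q = w := by
      rintro w hw q
      have hma0 : a * (a + b) = 0 := by rw [mul_add, haa, hab, hchar]
      have hmb0 : b * (a + b) = 0 := by rw [mul_add, hba, hbb, add_comm, hchar]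
      have hm1 : (a + b) * a = a + b := by rw [add_mul, haa, hba]
      have hm2 : (a + b) * b = a + b := by rw [add_mul, hab, hbb]
      have hm3 : (a + b) * (a + b) = 0 := by rw [mul_add, hm1, hm2, hchar]
      rcases hw with rfl | rfl | rfl <;> rcases key q with rfl | rfl | rfl | rfl <;>
        simp [haa, hbb, hab, hba, hma0, hmb0, hm1, hm2, hm3]
    have ha2 : a + a = 0 := hchar a
    have hb2 : b + b = 0 := hchar b
    have hab2 : (a + b) + (a + b) = 0 := hchar _
    refine ⟨![(pairSub a ha2).comap π, (pairSub b hb2).comap π, (pairSub (a+b) hab2).comap π],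
      ?_, ?_⟩
    · have hstep : ∀ (w : Q) (hw : w + w = 0), (w = a ∨ w = b ∨ w = a + b) →
          ∀ (r x : R), x ∈ (pairSub w hw).comap π → x * r ∈ (pairSub w hw).comap π := by
        intro w hw hwmem r x hx
        have hx' : (x : Q) = 0 ∨ (x : Q) = w := by
          rcases hx with h | h
          · exact Or.inl h
          · exact Or.inr h
        rcases hx' with h | h
        · exact Or.inl (show ((x * r : R) : Q) = 0 by rw [hπmul, h, zero_mul])
        · rcases tab w hwmem ((r : R) : Q) with h2 | h2
          · exact Or.inl (show ((x * r : R) : Q) = 0 by rw [hπmul, h]; exact h2)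
          · exact Or.inr (show ((x * r : R) : Q) = w by rw [hπmul, h]; exact h2)
      refine fun i => ⟨?_, by fin_cases i <;> exact hproper _ _⟩
      fin_cases i
      · exact hstep a ha2 (Or.inl rfl)
      · exact hstep b hb2 (Or.inr (Or.inl rfl))
      · exact hstep (a + b) hab2 (Or.inr (Or.inr rfl))
    · intro x
      rcases key (x : Q) with h | h | h | h
      · exact ⟨0, Or.inl h⟩
      · exact ⟨0, Or.inr h⟩
      · exact ⟨1, Or.inr h⟩
      · exact ⟨2, Or.inr h⟩

section Helpers
variable {R : Type*} [NonUnitalRing R]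

lemma exists_notMem' {A : AddSubgroup R} (hA : A ≠ ⊤) : ∃ x, x ∉ A := by
  by_contra h
  push_neg at h
  exact hA ((AddSubgroup.eq_top_iff' A).mpr h)

lemma no_two_cover' {A B : AddSubgroup R} (hA : A ≠ ⊤) (hB : B ≠ ⊤)
    (hcov : ∀ x : R, x ∈ A ∨ x ∈ B) : False := by
  obtain ⟨a, ha⟩ := exists_notMem' hA
  obtain ⟨b, hb⟩ := exists_notMem' hB
  have haB : a ∈ B := (hcov a).resolve_left ha
  have hbA : b ∈ A := (hcov b).resolve_right hb
  rcases hcov (a + b) with h | h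
  · exact ha (by simpa using A.sub_mem h hbA)
  · exact hb (by simpa using B.sub_mem h haB)

lemma interSub' {A B C : AddSubgroup R} {a : R} (haA : a ∈ A) (haB : a ∉ B) (haC : a ∉ C)
    (hcov : ∀ x : R, x ∈ A ∨ x ∈ B ∨ x ∈ C) {x : R} (hxB : x ∈ B) (hxC : x ∈ C) : x ∈ A := by
  rcases hcov (a + x) with h | h | h
  · simpa using A.sub_mem h haA
  · exact absurd (by simpa using B.sub_mem h hxB) haB
  · exact absurd (by simpa using C.sub_mem h hxC) haC

lemma subHelper' {A B C : AddSubgroup R} {c : R} (hcC : c ∈ C) (hcB : c ∉ B)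
    (hcov : ∀ x : R, x ∈ A ∨ x ∈ B ∨ x ∈ C) {x y : R}
    (hxB : x ∈ B) (hxC : x ∉ C) (hyB : y ∈ B) (hyC : y ∉ C) : x - y ∈ A := by
  have hx : c + x ∈ A := by
    rcases hcov (c + x) with h | h | h
    · exact h
    · exact absurd (by simpa using B.sub_mem h hxB) hcB
    · exact absurd (by simpa using C.sub_mem h hcC) hxC
  have hy : c + y ∈ A := by
    rcases hcov (c + y) with h | h | h
    · exact h
    · exact absurd (by simpa using B.sub_mem h hyB) hcB
    · exact absurd (by simpa using C.sub_mem h hcC) hyC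
  simpa using A.sub_mem hx hy

lemma subHelper2' {A B C : AddSubgroup R}
    (hcov : ∀ x : R, x ∈ A ∨ x ∈ B ∨ x ∈ C) {x y : R}
    (hxB : x ∈ B) (hxC : x ∉ C) (hyC : y ∈ C) (hyB : y ∉ B) : x - y ∈ A := by
  rcases hcov (x - y) with h | h | h
  · exact h
  · exact absurd (by simpa using B.sub_mem hxB h) hyB
  · exact absurd (by simpa using C.add_mem h hyC) hxC

lemma idx2' {A B C : AddSubgroup R} {a b c : R}
    (haA : a ∈ A) (haB : a ∉ B) (haC : a ∉ C)
    (hbB : b ∈ B) (hbA : b ∉ A) (hbC : b ∉ C)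
    (hcC : c ∈ C) (hcA : c ∉ A) (hcB : c ∉ B)
    (hcov : ∀ x : R, x ∈ A ∨ x ∈ B ∨ x ∈ C) {x y : R}
    (hx : x ∉ A) (hy : y ∉ A) : x - y ∈ A := by
  have hcov' : ∀ x : R, x ∈ A ∨ x ∈ C ∨ x ∈ B := fun x => by rcases hcov x with h|h|h <;> tauto
  have hBnC : ∀ z, z ∉ A → z ∈ B → z ∉ C := fun z hz hzB hzC =>
    hz (interSub' haA haB haC hcov hzB hzC)
  have hCnB : ∀ z, z ∉ A → z ∈ C → z ∉ B := fun z hz hzC hzB =>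
    hz (interSub' haA haB haC hcov hzB hzC)
  have hxBC := (hcov x).resolve_left hx
  have hyBC := (hcov y).resolve_left hy
  rcases hxBC with hxB | hxC
  · rcases hyBC with hyB | hyC
    · exact subHelper' hcC hcB hcov hxB (hBnC x hx hxB) hyB (hBnC y hy hyB)
    · by_cases hyB : y ∈ B
      · exact subHelper' hcC hcB hcov hxB (hBnC x hx hxB) hyB (hBnC y hy hyB)
      · exact subHelper2' hcov hxB (hBnC x hx hxB) hyC hyB
  · rcases hyBC with hyB | hyC
    · by_cases hxB : x ∈ B
      · exact subHelper' hcC hcB hcov hxB (hBnC x hx hxB) hyB (hBnC y hy hyB)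
      · have := subHelper2' hcov hyB (hBnC y hy hyB) hxC hxB
        simpa using A.neg_mem this
    · exact subHelper' hbB hbC hcov' hxC (hCnB x hx hxC) hyC (hCnB y hy hyC)

lemma card4' (I : TwoSidedIdeal R) (u v w : R)
    (hclass : ∀ x : R, x ∈ I ∨ x - u ∈ I ∨ x - v ∈ I ∨ x - w ∈ I)
    (hu : u ∉ I) (hv : v ∉ I) (hw : w ∉ I)
    (huv : u - v ∉ I) (huw : u - w ∉ I) (hvw : v - w ∉ I) :
    Nat.card I.ringCon.Quotient = 4 := by
  have hπ : ∀ x y : R, ((x : I.ringCon.Quotient) = (y : I.ringCon.Quotient)) ↔ x - y ∈ I := by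
    intro x y; rw [RingCon.eq]; exact I.rel_iff x y
  have huniv : (Set.univ : Set I.ringCon.Quotient) =
      {(0 : I.ringCon.Quotient), (u : I.ringCon.Quotient), (v : I.ringCon.Quotient), (w : I.ringCon.Quotient)} := by
    ext q
    simp only [Set.mem_univ, true_iff, Set.mem_insert_iff, Set.mem_singleton_iff]
    obtain ⟨x, rfl⟩ := q.exists_rep
    rcases hclass x with h | h | h | h
    · exact Or.inl ((hπ x 0).mpr (by simpa using h))
    · exact Or.inr (Or.inl ((hπ x u).mpr h))
    · exact Or.inr (Or.inr (Or.inl ((hπ x v).mpr h)))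
    · exact Or.inr (Or.inr (Or.inr ((hπ x w).mpr h)))
  have d1 : (0 : I.ringCon.Quotient) ≠ (u : I.ringCon.Quotient) :=
    fun h => hu (by simpa using I.neg_mem ((hπ 0 u).mp h))
  have d2 : (0 : I.ringCon.Quotient) ≠ (v : I.ringCon.Quotient) :=
    fun h => hv (by simpa using I.neg_mem ((hπ 0 v).mp h))
  have d3 : (0 : I.ringCon.Quotient) ≠ (w : I.ringCon.Quotient) :=
    fun h => hw (by simpa using I.neg_mem ((hπ 0 w).mp h))
  have d4 : (u : I.ringCon.Quotient) ≠ (v : I.ringCon.Quotient) :=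
    fun h => huv ((hπ _ _).mp h)
  have d5 : (u : I.ringCon.Quotient) ≠ (w : I.ringCon.Quotient) :=
    fun h => huw ((hπ _ _).mp h)
  have d6 : (v : I.ringCon.Quotient) ≠ (w : I.ringCon.Quotient) :=
    fun h => hvw ((hπ _ _).mp h)
  rw [← Set.ncard_univ, huniv]
  rw [Set.ncard_insert_of_notMem (by simp [d1, d2, d3]) (Set.toFinite _),
    Set.ncard_insert_of_notMem (by simp [d4, d5]) (Set.toFinite _),
    Set.ncard_pair d6]

lemma quotChar' (I : TwoSidedIdeal R) (h : ∀ x : R, x + x ∈ I) :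
    ∀ q : I.ringCon.Quotient, q + q = 0 := by
  intro q
  obtain ⟨x, rfl⟩ := q.exists_rep
  have : ((x + x : R) : I.ringCon.Quotient) = ((0 : R) : I.ringCon.Quotient) := by
    rw [RingCon.eq, I.rel_iff]; simpa using h x
  exact this

lemma quotZero' (I : TwoSidedIdeal R) (h : ∀ x y : R, x * y ∈ I) :
    ∀ q r : I.ringCon.Quotient, q * r = 0 := by
  intro q r
  obtain ⟨x, rfl⟩ := q.exists_rep
  obtain ⟨y, rfl⟩ := r.exists_rep
  have : ((x * y : R) : I.ringCon.Quotient) = ((0 : R) : I.ringCon.Quotient) := by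
    rw [RingCon.eq, I.rel_iff]; simpa using h x y
  exact this

end Helpers

lemma forwardDir (R : Type*) [NonUnitalRing R]
    (A B C : AddSubgroup R)
    (hAri : IsRightIdeal A) (hBri : IsRightIdeal B) (hCri : IsRightIdeal C)
    (hAt : A ≠ ⊤) (hBt : B ≠ ⊤) (hCt : C ≠ ⊤)
    (hcov : ∀ x : R, x ∈ A ∨ x ∈ B ∨ x ∈ C) :
    ∃ I : TwoSidedIdeal R,
      Nat.card I.ringCon.Quotient = 4 ∧
      (∀ x : I.ringCon.Quotient, x + x = 0) ∧
      ((∀ x y : I.ringCon.Quotient, x * y = 0) ∨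
        ∃ a b : I.ringCon.Quotient, AddSubgroup.closure {a, b} = ⊤ ∧
          a * a = a ∧ b * b = b ∧ a * b = a ∧ b * a = b) := by
  classical
  -- irredundance witnesses
  have hex : ∀ (P Q' : AddSubgroup R), P ≠ ⊤ → Q' ≠ ⊤ → ∃ x, x ∉ P ∧ x ∉ Q' := by
    intro P Q' hP hQ'
    by_contra h
    push_neg at h
    exact no_two_cover' hP hQ' (fun x => by
      by_cases hx : x ∈ P
      · exact Or.inl hx
      · exact Or.inr (h x hx))
  obtain ⟨a, haB, haC⟩ := hex B C hBt hCt
  have haA : a ∈ A := by rcases hcov a with h|h|h <;> tauto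
  obtain ⟨b, hbA, hbC⟩ := hex A C hAt hCt
  have hbB : b ∈ B := by rcases hcov b with h|h|h <;> tauto
  have hcA : a + b ∉ A := fun h => hbA (by simpa using A.sub_mem h haA)
  have hcB : a + b ∉ B := fun h => haB (by simpa using B.sub_mem h hbB)
  have hcC : a + b ∈ C := by rcases hcov (a+b) with h|h|h <;> tauto
  have hcovBAC : ∀ x : R, x ∈ B ∨ x ∈ A ∨ x ∈ C := fun x => by rcases hcov x with h|h|h <;> tauto
  have hcovCAB : ∀ x : R, x ∈ C ∨ x ∈ A ∨ x ∈ B := fun x => by rcases hcov x with h|h|h <;> tauto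
  have subA : ∀ x y : R, x ∉ A → y ∉ A → x - y ∈ A :=
    fun x y hx hy => idx2' haA haB haC hbB hbA hbC hcC hcA hcB hcov hx hy
  have subB : ∀ x y : R, x ∉ B → y ∉ B → x - y ∈ B :=
    fun x y hx hy => idx2' hbB hbA hbC haA haB haC hcC hcB hcA hcovBAC hx hy
  have subC : ∀ x y : R, x ∉ C → y ∉ C → x - y ∈ C :=
    fun x y hx hy => idx2' hcC hcA hcB haA haC haB hbB hbC hbA hcovCAB hx hy
  have interAB : ∀ x : R, x ∈ A → x ∈ B → x ∈ C :=
    fun x hx hy => interSub' hcC hcA hcB hcovCAB hx hy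
  have interAC : ∀ x : R, x ∈ A → x ∈ C → x ∈ B :=
    fun x hx hy => interSub' hbB hbA hbC hcovBAC hx hy
  set N : AddSubgroup R := A ⊓ B ⊓ C with hNdef
  have hN : ∀ x : R, x ∈ N ↔ x ∈ A ∧ x ∈ B ∧ x ∈ C := fun x => by
    rw [hNdef, AddSubgroup.mem_inf, AddSubgroup.mem_inf, and_assoc]
  have haN : a ∉ N := fun h => haB ((hN a).mp h).2.1
  have hbN : b ∉ N := fun h => hbA ((hN b).mp h).1
  have habN : a + b ∉ N := fun h => hcA ((hN _).mp h).1
  have hsubabN : a - b ∉ N := fun h => haB (by simpa using B.add_mem (((hN _).mp h).2.1) hbB)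
  have twoMem : ∀ (P : AddSubgroup R), (∀ x y : R, x ∉ P → y ∉ P → x - y ∈ P) →
      ∀ x : R, x + x ∈ P := by
    intro P hP x
    by_cases hx : x ∈ P
    · exact P.add_mem hx hx
    · have h := hP x (-x) hx (fun hh => hx (by simpa using P.neg_mem hh))
      simpa [sub_neg_eq_add] using h
  have h2N : ∀ x : R, x + x ∈ N :=
    fun x => (hN _).mpr ⟨twoMem A subA x, twoMem B subB x, twoMem C subC x⟩
  have cosetA : ∀ x : R, x ∈ A → x ∉ N → x - a ∈ N := by
    intro x hxA hxN
    have hxB : x ∉ B := fun h => hxN ((hN x).mpr ⟨hxA, h, interAB x hxA h⟩)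
    have hxC : x ∉ C := fun h => hxN ((hN x).mpr ⟨hxA, interAC x hxA h, h⟩)
    exact (hN _).mpr ⟨A.sub_mem hxA haA, subB x a hxB haB, subC x a hxC haC⟩
  have cosetB : ∀ x : R, x ∈ B → x ∉ N → x - b ∈ N := by
    intro x hxB hxN
    have hxA : x ∉ A := fun h => hxN ((hN x).mpr ⟨h, hxB, interAB x h hxB⟩)
    have hxC : x ∉ C := fun h => hxN ((hN x).mpr ⟨interSub' haA haB haC hcov hxB h, hxB, h⟩)
    exact (hN _).mpr ⟨subA x b hxA hbA, B.sub_mem hxB hbB, subC x b hxC hbC⟩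
  have cosetC : ∀ x : R, x ∈ C → x ∉ N → x - (a + b) ∈ N := by
    intro x hxC hxN
    have hxA : x ∉ A := fun h => hxN ((hN x).mpr ⟨h, interAC x h hxC, hxC⟩)
    have hxB : x ∉ B := fun h => hxN ((hN x).mpr ⟨interSub' haA haB haC hcov h hxC, h, hxC⟩)
    exact (hN _).mpr ⟨subA x _ hxA hcA, subB x _ hxB hcB, C.sub_mem hxC hcC⟩
  have classify : ∀ x : R, x ∈ N ∨ x - a ∈ N ∨ x - b ∈ N ∨ x - (a + b) ∈ N := by
    intro x
    by_cases hxN : x ∈ N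
    · exact Or.inl hxN
    rcases hcov x with h|h|h
    · exact Or.inr (Or.inl (cosetA x h hxN))
    · exact Or.inr (Or.inr (Or.inl (cosetB x h hxN)))
    · exact Or.inr (Or.inr (Or.inr (cosetC x h hxN)))
  have Nmul : ∀ n : R, n ∈ N → ∀ y : R, n * y ∈ N := by
    intro n hn y
    obtain ⟨h1, h2, h3⟩ := (hN n).mp hn
    exact (hN _).mpr ⟨hAri y h1, hBri y h2, hCri y h3⟩
  -- the key dichotomy
  have key : ∀ y : R, (∀ x : R, x * y - x ∈ N) ∨ (∀ x : R, x * y ∈ N) := by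
    intro y
    have hay : a * y ∈ N ∨ a * y - a ∈ N := by
      by_cases h : a * y ∈ N
      · exact Or.inl h
      · exact Or.inr (cosetA _ (hAri y haA) h)
    have hby : b * y ∈ N ∨ b * y - b ∈ N := by
      by_cases h : b * y ∈ N
      · exact Or.inl h
      · exact Or.inr (cosetB _ (hBri y hbB) h)
    have hcy : (a + b) * y ∈ N ∨ (a + b) * y - (a + b) ∈ N := by
      by_cases h : (a + b) * y ∈ N
      · exact Or.inl h
      · exact Or.inr (cosetC _ (hCri y hcC) h)
    rcases hay with h1 | h1 <;> rcases hby with h2 | h2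
    · -- both zero
      right
      have gen : ∀ r : R, r * y ∈ N → ∀ x : R, x - r ∈ N → x * y ∈ N := by
        intro r hr x hx
        have h3 := N.add_mem (Nmul _ hx y) hr
        have e : (x - r) * y + r * y = x * y := by rw [sub_mul]; abel
        rwa [e] at h3
      intro x
      rcases classify x with hx | hx | hx | hx
      · exact Nmul x hx y
      · exact gen a h1 x hx
      · exact gen b h2 x hx
      · refine gen (a + b) ?_ x hx
        rw [add_mul]; exact N.add_mem h1 h2
    · -- a*y ∈ N, b*y - b ∈ N : contradiction
      exfalso
      rcases hcy with h3 | h3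
      · have hb' : b * y ∈ N := by
          have h4 := N.sub_mem h3 h1
          rwa [add_mul, add_sub_cancel_left] at h4
        have h5 := N.sub_mem hb' h2
        rw [sub_sub_cancel] at h5
        exact hbN h5
      · have h4 := N.sub_mem (N.sub_mem h3 h1) h2
        have e : ((a + b) * y - (a + b)) - a * y - (b * y - b) = -a := by rw [add_mul]; abel
        rw [e] at h4
        exact haN (by simpa using N.neg_mem h4)
    · -- a*y - a ∈ N, b*y ∈ N : contradiction
      exfalso
      rcases hcy with h3 | h3
      · have h4 := N.sub_mem (N.sub_mem h3 h2) h1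
        have e : ((a + b) * y) - b * y - (a * y - a) = a := by rw [add_mul]; abel
        rw [e] at h4
        exact haN h4
      · have h4 := N.sub_mem (N.sub_mem h3 h2) h1
        have e : ((a + b) * y - (a + b)) - b * y - (a * y - a) = -b := by rw [add_mul]; abel
        rw [e] at h4
        exact hbN (by simpa using N.neg_mem h4)
    · -- both identity
      left
      have gen : ∀ r : R, r * y - r ∈ N → ∀ x : R, x - r ∈ N → x * y - x ∈ N := by
        intro r hr x hx
        have h3 := N.sub_mem (N.add_mem (Nmul _ hx y) hr) hx
        have e : ((x - r) * y + (r * y - r)) - (x - r) = x * y - x := by rw [sub_mul]; abel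
        rwa [e] at h3
      intro x
      rcases classify x with hx | hx | hx | hx
      · exact N.sub_mem (Nmul _ hx y) hx
      · exact gen a h1 x hx
      · exact gen b h2 x hx
      · refine gen (a + b) ?_ x hx
        have h3 := N.add_mem h1 h2
        have e : (a * y - a) + (b * y - b) = (a + b) * y - (a + b) := by rw [add_mul]; abel
        rwa [e] at h3
  by_cases hP1 : ∃ y₁ : R, ∀ x : R, x * y₁ - x ∈ N
  case neg =>
    -- zero multiplication case
    have hZ : ∀ y x : R, x * y ∈ N := by
      intro y
      rcases key y with h | h
      · exact absurd ⟨y, h⟩ hP1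
      · exact h
    refine ⟨TwoSidedIdeal.mk' (N : Set R) N.zero_mem (fun hx hy => N.add_mem hx hy)
      (fun hx => N.neg_mem hx) (fun {x y} _ => hZ y x) (fun {x y} _ => hZ y x), ?_, ?_, ?_⟩
    · refine card4' _ a b (a + b) ?_ ?_ ?_ ?_ ?_ ?_ ?_ <;>
        simp only [TwoSidedIdeal.mem_mk', SetLike.mem_coe]
      · exact classify
      · exact haN
      · exact hbN
      · exact habN
      · exact hsubabN
      · intro h
        have h' := N.neg_mem h
        rw [show -(a - (a + b)) = b from by abel] at h'
        exact hbN h'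
      · intro h
        have h' := N.neg_mem h
        rw [show -(b - (a + b)) = a from by abel] at h'
        exact haN h'
    · exact quotChar' _ (fun x => by
        simp only [TwoSidedIdeal.mem_mk', SetLike.mem_coe]; exact h2N x)
    · exact Or.inl (quotZero' _ (fun x y => by
        simp only [TwoSidedIdeal.mem_mk', SetLike.mem_coe]; exact hZ y x))
  case pos =>
    obtain ⟨y₁, hy₁⟩ := hP1
    -- select k₀ with "χ k₀ = 0" but k₀ ∉ N
    obtain ⟨k₀, hk₀Z, hk₀N⟩ : ∃ k : R, (∀ t : R, t * k ∈ N) ∧ k ∉ N := by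
      rcases key a with ha' | ha'
      · rcases key b with hb' | hb'
        · refine ⟨a + b, ?_, habN⟩
          intro t
          have h3 := N.add_mem (N.add_mem (ha' t) (hb' t)) (h2N t)
          have e : ((t * a - t) + (t * b - t)) + (t + t) = t * (a + b) := by
            rw [mul_add]; abel
          rwa [e] at h3
        · exact ⟨b, hb', hbN⟩
      · exact ⟨a, ha', haN⟩
    -- the subgroup I₀ generated by all obstructions
    set Sgen : Set R := ({z | ∃ x y : R, (∀ t : R, t * y - t ∈ N) ∧ z = x * y - x} ∪
      {z | ∃ x y : R, (∀ t : R, t * y ∈ N) ∧ z = x * y}) ∪ {z | ∃ x : R, z = x + x}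
      with hSgendef
    set I₀ : AddSubgroup R := AddSubgroup.closure Sgen with hI₀def
    have hgen1 : ∀ x y : R, (∀ t : R, t * y - t ∈ N) → x * y - x ∈ I₀ :=
      fun x y h => AddSubgroup.subset_closure (Or.inl (Or.inl ⟨x, y, h, rfl⟩))
    have hgen2 : ∀ x y : R, (∀ t : R, t * y ∈ N) → x * y ∈ I₀ :=
      fun x y h => AddSubgroup.subset_closure (Or.inl (Or.inr ⟨x, y, h, rfl⟩))
    have hgen3 : ∀ x : R, x + x ∈ I₀ :=
      fun x => AddSubgroup.subset_closure (Or.inr ⟨x, rfl⟩)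
    have hI₀N : I₀ ≤ N := by
      rw [hI₀def]
      refine (AddSubgroup.closure_le N).mpr ?_
      rintro z ((⟨x, y, h, rfl⟩ | ⟨x, y, h, rfl⟩) | ⟨x, rfl⟩)
      · exact h x
      · exact h x
      · exact h2N x
    have hI₀Z : ∀ z ∈ I₀, ∀ t : R, t * z ∈ N := by
      intro z hz
      rw [hI₀def] at hz
      induction hz using AddSubgroup.closure_induction with
      | mem w hw =>
        rcases hw with (⟨x, y, h, rfl⟩ | ⟨x, y, h, rfl⟩) | ⟨x, rfl⟩
        · intro t
          have h5 := h (t * x)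
          have e : t * x * y - t * x = t * (x * y - x) := by rw [mul_sub, mul_assoc]
          rwa [e] at h5
        · intro t
          have h5 := h (t * x)
          rwa [← mul_assoc]
        · intro t
          have h5 := h2N (t * x)
          rwa [← mul_add] at h5
      | zero => intro t; rw [mul_zero]; exact N.zero_mem
      | add u v hu hv ihu ihv => intro t; rw [mul_add]; exact N.add_mem (ihu t) (ihv t)
      | neg u hu ihu => intro t; rw [mul_neg]; exact N.neg_mem (ihu t)
    -- Zorn's lemma: a maximal subgroup between I₀ and "ker χ" avoiding k₀
    set s : Set (AddSubgroup R) :=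
      {M | I₀ ≤ M ∧ (∀ z ∈ M, ∀ t : R, t * z ∈ N) ∧ k₀ ∉ M} with hsdef
    have hI₀s : I₀ ∈ s := ⟨le_refl _, hI₀Z, fun h => hk₀N (hI₀N h)⟩
    obtain ⟨M, hIM, hMmax⟩ : ∃ M, I₀ ≤ M ∧ Maximal (· ∈ s) M := by
      refine zorn_le_nonempty₀ s ?_ I₀ hI₀s
      intro c hcs hchain y hy
      haveI : Nonempty c := ⟨⟨y, hy⟩⟩
      have hdir : Directed (· ≤ ·) (fun M : c => (M : AddSubgroup R)) := by
        rintro ⟨M1, h1⟩ ⟨M2, h2⟩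
        rcases hchain.total h1 h2 with h | h
        · exact ⟨⟨M2, h2⟩, h, le_refl _⟩
        · exact ⟨⟨M1, h1⟩, le_refl _, h⟩
      refine ⟨⨆ M : c, (M : AddSubgroup R), ⟨?_, ?_, ?_⟩, ?_⟩
      · exact le_trans (hcs hy).1 (le_iSup (fun M : c => (M : AddSubgroup R)) ⟨y, hy⟩)
      · intro z hz t
        obtain ⟨⟨M', hM'⟩, hzM⟩ := (AddSubgroup.mem_iSup_of_directed hdir).mp hz
        exact (hcs hM').2.1 z hzM t
      · intro h
        obtain ⟨⟨M', hM'⟩, hzM⟩ := (AddSubgroup.mem_iSup_of_directed hdir).mp h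
        exact (hcs hM').2.2 hzM
      · intro z hz
        exact le_iSup (fun M : c => (M : AddSubgroup R)) ⟨z, hz⟩
    have hMZ : ∀ z ∈ M, ∀ t : R, t * z ∈ N := hMmax.1.2.1
    have hk₀M : k₀ ∉ M := hMmax.1.2.2
    -- M has index 2 in "ker χ"
    have hM2 : ∀ k : R, (∀ t : R, t * k ∈ N) → k ∉ M → k - k₀ ∈ M := by
      intro k hk hkM
      have hk₀M' : k₀ ∈ M ⊔ AddSubgroup.closure {k} := by
        by_contra hcon
        have hM's : (M ⊔ AddSubgroup.closure {k}) ∈ s := by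
          refine ⟨le_trans hMmax.1.1 le_sup_left, ?_, hcon⟩
          intro z hz t
          rcases AddSubgroup.mem_sup.mp hz with ⟨m, hm, w, hw, rfl⟩
          obtain ⟨n, rfl⟩ := AddSubgroup.mem_closure_singleton.mp hw
          rw [mul_add]
          refine N.add_mem (hMZ m hm t) ?_
          have e : t * (n • k) = n • (t * k) := (AddMonoidHom.mulLeft t).map_zsmul n k
          rw [e]
          exact N.zsmul_mem (hk t) n
        have hle := hMmax.2 hM's le_sup_left
        exact hkM (hle (AddSubgroup.mem_sup_right
          (AddSubgroup.mem_closure_singleton.mpr ⟨1, one_zsmul k⟩)))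
      rcases AddSubgroup.mem_sup.mp hk₀M' with ⟨m, hm, w, hw, hsum⟩
      obtain ⟨n, rfl⟩ := AddSubgroup.mem_closure_singleton.mp hw
      have h2k : k + k ∈ M := hIM (hgen3 k)
      have hnk : n • k - (n % 2) • k ∈ M := by
        have e1 : n • k - (n % 2) • k = (n - n % 2) • k := by rw [sub_zsmul]; abel
        have e2 : n - n % 2 = n / 2 * 2 := by omega
        rw [e1, e2, mul_zsmul, two_zsmul]
        exact M.zsmul_mem h2k _
      rcases Int.emod_two_eq_zero_or_one n with h | h
      · rw [h, zero_zsmul, sub_zero] at hnk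
        exact absurd (hsum ▸ M.add_mem hm hnk) hk₀M
      · rw [h, one_zsmul] at hnk
        have h5 : m + (n • k - k) ∈ M := M.add_mem hm hnk
        have e : m + (n • k - k) = (m + n • k) - k := by abel
        rw [e, hsum] at h5
        have := M.neg_mem h5
        rwa [neg_sub] at this
    -- M is a two-sided ideal
    have hmulL : ∀ x z : R, z ∈ M → x * z ∈ M := fun x z hz => hIM (hgen2 x z (hMZ z hz))
    have hmulR : ∀ x z : R, x ∈ M → x * z ∈ M := by
      intro x z hx
      rcases key z with h | h
      · have h5 := hIM (hgen1 x z h)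
        have h6 := M.add_mem h5 hx
        rwa [sub_add_cancel] at h6
      · exact hIM (hgen2 x z h)
    -- properties needed about M
    have hPy2 : ∀ t : R, t * (y₁ + k₀) - t ∈ N := by
      intro t
      have h5 := N.add_mem (hy₁ t) (hk₀Z t)
      have e : (t * y₁ - t) + t * k₀ = t * (y₁ + k₀) - t := by rw [mul_add]; abel
      rwa [e] at h5
    have hnotM : ∀ z : R, (∀ t : R, t * z - t ∈ N) → z ∉ M := by
      intro z hz hzM
      have h5 := N.sub_mem (hMZ z hzM a) (hz a)
      rw [sub_sub_cancel] at h5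
      exact haN h5
    have hy₁M : y₁ ∉ M := hnotM y₁ hy₁
    have hy₂M : y₁ + k₀ ∉ M := hnotM _ hPy2
    have hPk0y1 : ∀ t : R, t * (k₀ - y₁) - t ∈ N := by
      intro t
      have h5 := N.sub_mem (N.sub_mem (hk₀Z t) (hy₁ t)) (h2N t)
      have e : (t * k₀ - (t * y₁ - t)) - (t + t) = t * (k₀ - y₁) - t := by
        rw [mul_sub]; abel
      rwa [e] at h5
    have hd1 : k₀ - y₁ ∉ M := hnotM _ hPk0y1
    have hd2 : k₀ - (y₁ + k₀) ∉ M := by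
      intro h
      have h' := M.neg_mem h
      rw [show -(k₀ - (y₁ + k₀)) = y₁ from by abel] at h'
      exact hy₁M h'
    have hd3 : y₁ - (y₁ + k₀) ∉ M := by
      intro h
      have h' := M.neg_mem h
      rw [show -(y₁ - (y₁ + k₀)) = k₀ from by abel] at h'
      exact hk₀M h'
    have hclass4 : ∀ x : R, x ∈ M ∨ x - k₀ ∈ M ∨ x - y₁ ∈ M ∨ x - (y₁ + k₀) ∈ M := by
      intro x
      rcases key x with hPx | hZx
      · have hzxy : ∀ t : R, t * (x - y₁) ∈ N := by
          intro t
          have h5 := N.sub_mem (hPx t) (hy₁ t)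
          have e : (t * x - t) - (t * y₁ - t) = t * (x - y₁) := by rw [mul_sub]; abel
          rwa [e] at h5
        by_cases h : x - y₁ ∈ M
        · exact Or.inr (Or.inr (Or.inl h))
        · have h5 := hM2 _ hzxy h
          rw [sub_sub] at h5
          exact Or.inr (Or.inr (Or.inr h5))
      · by_cases h : x ∈ M
        · exact Or.inl h
        · exact Or.inr (Or.inl (hM2 x hZx h))
    refine ⟨TwoSidedIdeal.mk' (M : Set R) M.zero_mem (fun hx hy => M.add_mem hx hy)
      (fun hx => M.neg_mem hx) (fun {x y} hy => hmulL x y hy) (fun {x y} hx => hmulR x y hx),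
      ?_, ?_, ?_⟩
    · refine card4' _ k₀ y₁ (y₁ + k₀) ?_ ?_ ?_ ?_ ?_ ?_ ?_ <;>
        simp only [TwoSidedIdeal.mem_mk', SetLike.mem_coe]
      · exact hclass4
      · exact hk₀M
      · exact hy₁M
      · exact hy₂M
      · exact hd1
      · exact hd2
      · exact hd3
    · exact quotChar' _ (fun x => by
        simp only [TwoSidedIdeal.mem_mk', SetLike.mem_coe]; exact hIM (hgen3 x))
    · -- the idempotent structure
      right
      set I := TwoSidedIdeal.mk' (M : Set R) M.zero_mem (fun hx hy => M.add_mem hx hy)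
        (fun hx => M.neg_mem hx) (fun {x y} hy => hmulL x y hy) (fun {x y} hx => hmulR x y hx)
        with hIdef
      have hπ : ∀ x y : R, ((x : I.ringCon.Quotient) = (y : I.ringCon.Quotient)) ↔ x - y ∈ M := by
        intro x y
        rw [RingCon.eq, I.rel_iff, hIdef, TwoSidedIdeal.mem_mk', SetLike.mem_coe]
      refine ⟨(y₁ : I.ringCon.Quotient), ((y₁ + k₀ : R) : I.ringCon.Quotient), ?_, ?_, ?_, ?_, ?_⟩
      · -- closure is everything
        rw [eq_top_iff]
        intro q _
        obtain ⟨x, rfl⟩ := q.exists_rep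
        have hmem1 : (y₁ : I.ringCon.Quotient) ∈
            AddSubgroup.closure {(y₁ : I.ringCon.Quotient), ((y₁ + k₀ : R) : I.ringCon.Quotient)} :=
          AddSubgroup.subset_closure (Or.inl rfl)
        have hmem2 : ((y₁ + k₀ : R) : I.ringCon.Quotient) ∈
            AddSubgroup.closure {(y₁ : I.ringCon.Quotient), ((y₁ + k₀ : R) : I.ringCon.Quotient)} :=
          AddSubgroup.subset_closure (Or.inr rfl)
        show (x : I.ringCon.Quotient) ∈
          AddSubgroup.closure {(y₁ : I.ringCon.Quotient), ((y₁ + k₀ : R) : I.ringCon.Quotient)}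
        rcases hclass4 x with h | h | h | h
        · have h5 : (x : I.ringCon.Quotient) = ((0 : R) : I.ringCon.Quotient) :=
            (hπ x 0).mpr (by simpa using h)
          rw [h5]
          exact AddSubgroup.zero_mem _
        · have h5 : (x : I.ringCon.Quotient) = ((k₀ : R) : I.ringCon.Quotient) := (hπ x k₀).mpr h
          have h6 : ((k₀ : R) : I.ringCon.Quotient) =
              (y₁ : I.ringCon.Quotient) + ((y₁ + k₀ : R) : I.ringCon.Quotient) := by
            refine ((hπ (y₁ + (y₁ + k₀)) k₀).mpr ?_).symm
            have e : y₁ + (y₁ + k₀) - k₀ = y₁ + y₁ := by abel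
            rw [e]
            exact hIM (hgen3 y₁)
          rw [h5, h6]
          exact AddSubgroup.add_mem _ hmem1 hmem2
        · rw [(hπ x y₁).mpr h]
          exact hmem1
        · rw [(hπ x (y₁ + k₀)).mpr h]
          exact hmem2
      · exact (hπ (y₁ * y₁) y₁).mpr (hIM (hgen1 y₁ y₁ hy₁))
      · exact (hπ ((y₁ + k₀) * (y₁ + k₀)) (y₁ + k₀)).mpr (hIM (hgen1 _ _ hPy2))
      · exact (hπ (y₁ * (y₁ + k₀)) y₁).mpr (hIM (hgen1 _ _ hPy2))
      · exact (hπ ((y₁ + k₀) * y₁) (y₁ + k₀)).mpr (hIM (hgen1 _ _ hy₁))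

/-- A ring has right ideal covering number exactly 3 if and only if it has a factor
ring of order 4 with elementary abelian additive group which either has zero
multiplication, or is generated by elements `a, b` with
`a² = a, b² = b, ab = a, ba = b`. -/
theorem right_ideal_covering_number_eq_three (R : Type*) [NonUnitalRing R] :
    ((∃ f : Fin 3 → AddSubgroup R,
        (∀ i, IsRightIdeal (f i) ∧ f i ≠ ⊤) ∧ ∀ x : R, ∃ i, x ∈ f i) ∧
      ¬ ∃ f : Fin 2 → AddSubgroup R,
        (∀ i, IsRightIdeal (f i) ∧ f i ≠ ⊤) ∧ ∀ x : R, ∃ i, x ∈ f i) ↔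
    ∃ I : TwoSidedIdeal R,
      Nat.card I.ringCon.Quotient = 4 ∧
      (∀ x : I.ringCon.Quotient, x + x = 0) ∧
      ((∀ x y : I.ringCon.Quotient, x * y = 0) ∨
        ∃ a b : I.ringCon.Quotient, AddSubgroup.closure {a, b} = ⊤ ∧
          a * a = a ∧ b * b = b ∧ a * b = a ∧ b * a = b) := by
  constructor
  · rintro ⟨⟨f, hf, hcov3⟩, -⟩
    have hcov : ∀ x : R, x ∈ f 0 ∨ x ∈ f 1 ∨ x ∈ f 2 := by
      intro x
      obtain ⟨i, hi⟩ := hcov3 x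
      fin_cases i <;> tauto
    exact forwardDir R (f 0) (f 1) (f 2) (hf 0).1 (hf 1).1 (hf 2).1
      (hf 0).2 (hf 1).2 (hf 2).2 hcov
  · rintro ⟨I, hcard, hchar, hmul⟩
    refine ⟨reverseDir R I hcard hchar hmul, ?_⟩
    rintro ⟨f, hf, hcov⟩
    exact no_two_cover' (hf 0).2 (hf 1).2 (fun x => by
      obtain ⟨i, hi⟩ := hcov x
      fin_cases i <;> tauto)
end

section
/- Let p be a prime and let A be a finite abelian p-group that is not cyclic. Then A is the union of p + 1 proper subgroups, and A is not the union of any p proper subgroups. -/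
open Subgroup

lemma zpow_eq_zpow_iff_zmod {G : Type*} [Group G] {x : G} {p : ℕ} (hx : orderOf x = p)
    (a b : ℤ) : x ^ a = x ^ b ↔ (a : ZMod p) = (b : ZMod p) := by
  rw [← mul_inv_eq_one, ← zpow_sub, ← orderOf_dvd_iff_zpow_eq_one, hx,
    ← ZMod.intCast_zmod_eq_zero_iff_dvd, Int.cast_sub, sub_eq_zero]

lemma exists_two_coatoms {G : Type*} [Group G] [Finite G] (hnc : ¬ IsCyclic G) :
    ∃ M N : Subgroup G, IsCoatom M ∧ IsCoatom N ∧ M ≠ N := by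
  have : IsCoatomic (Subgroup G) := Finite.to_isCoatomic
  by_contra h
  push_neg at h
  have hzp : ∀ x : G, zpowers x ≠ ⊤ := by
    intro x hx
    exact hnc ⟨⟨x, fun y => (by rw [hx]; trivial : y ∈ zpowers x)⟩⟩
  have hnt : Nontrivial G := by
    by_contra hs
    have : Subsingleton G := not_nontrivial_iff_subsingleton.mp hs
    exact hnc isCyclic_of_subsingleton
  obtain ⟨M, hM⟩ : ∃ M : Subgroup G, IsCoatom M := by
    rcases eq_top_or_exists_le_coatom (⊥ : Subgroup G) with h1 | ⟨M, hM, _⟩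
    · exact absurd h1 bot_ne_top
    · exact ⟨M, hM⟩
  have hall : ∀ x : G, x ∈ M := by
    intro x
    rcases eq_top_or_exists_le_coatom (zpowers x) with h1 | ⟨N, hN, hle⟩
    · exact absurd h1 (hzp x)
    · exact (h M N hM hN) ▸ hle (mem_zpowers x)
  exact hM.1 ((eq_top_iff' M).mpr hall)

lemma coatom_index_eq {G : Type*} [CommGroup G] [Finite G] {p k : ℕ} (hp : p.Prime)
    (hcard : Nat.card G = p ^ k) {M : Subgroup G} (hM : IsCoatom M) : M.index = p := by
  haveI : Fact p.Prime := ⟨hp⟩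
  have hdvd : M.index ∣ p ^ k := hcard ▸ M.index_dvd_card
  have hpdvd : p ∣ M.index := by
    obtain ⟨j, hj, he⟩ := (Nat.dvd_prime_pow hp).mp hdvd
    cases j with
    | zero => rw [pow_zero] at he; exact absurd (Subgroup.index_eq_one.mp he) hM.1
    | succ j => exact he ▸ dvd_pow_self p (Nat.succ_ne_zero j)
  rw [Subgroup.index_eq_card] at hpdvd
  obtain ⟨g, hg⟩ := exists_prime_orderOf_dvd_card' (G := G ⧸ M) p hpdvd
  set K := Subgroup.comap (QuotientGroup.mk' M) (zpowers g) with hK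
  have hMK : M ≤ K := fun m hm => by
    simp [hK, Subgroup.mem_comap, (QuotientGroup.eq_one_iff m).mpr hm, Subgroup.one_mem]
  obtain ⟨a, ha⟩ := QuotientGroup.mk'_surjective M g
  have haK : a ∈ K := by simp [hK, Subgroup.mem_comap, ha, mem_zpowers]
  have haM : a ∉ M := fun hmem => by
    have h1 : g = 1 := by rw [← ha]; exact (QuotientGroup.eq_one_iff a).mpr hmem
    rw [h1, orderOf_one] at hg
    exact hp.ne_one hg.symm
  have hlt : M < K := lt_of_le_of_ne hMK (fun h => haM (h ▸ haK))
  have hKtop : K = ⊤ := hM.2 K hlt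
  have hmap : Subgroup.map (QuotientGroup.mk' M) K = zpowers g :=
    Subgroup.map_comap_eq_self_of_surjective (QuotientGroup.mk'_surjective M) _
  have hzt : zpowers g = ⊤ := by
    rw [← hmap, hKtop, Subgroup.map_top_of_surjective _ (QuotientGroup.mk'_surjective M)]
  have hcardQ : orderOf g = Nat.card (G ⧸ M) :=
    orderOf_eq_card_of_forall_mem_zpowers (fun x => by rw [hzt]; exact mem_top x)
  rw [Subgroup.index_eq_card, ← hcardQ, hg]

lemma coatoms_sup_eq_top {G : Type*} [Group G] {M N : Subgroup G}
    (hM : IsCoatom M) (hN : IsCoatom N) (hMN : M ≠ N) : M ⊔ N = ⊤ := by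
  have hNM : ¬ N ≤ M := by
    intro hle
    exact hM.1 (hN.2 M (lt_of_le_of_ne hle hMN.symm))
  exact hM.2 (M ⊔ N) (lt_of_le_of_ne le_sup_left (fun h => hNM (h ▸ le_sup_right)))

lemma prod_mk_surjective {G : Type*} [CommGroup G] {M N : Subgroup G}
    (h : M ⊔ N = ⊤) :
    Function.Surjective ((QuotientGroup.mk' M).prod (QuotientGroup.mk' N)) := by
  rintro ⟨x, y⟩
  obtain ⟨a, ha⟩ := QuotientGroup.mk'_surjective M x
  obtain ⟨b, hb⟩ := QuotientGroup.mk'_surjective N y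
  have hmem : a⁻¹ * b ∈ M ⊔ N := by rw [h]; trivial
  obtain ⟨m, hm, n, hn, hmn⟩ := Subgroup.mem_sup.mp hmem
  refine ⟨a * m, Prod.ext ?_ ?_⟩
  · show QuotientGroup.mk' M (a * m) = x
    have h1 : QuotientGroup.mk' M m = 1 := (QuotientGroup.eq_one_iff m).mpr hm
    rw [map_mul, h1, mul_one, ha]
  · show QuotientGroup.mk' N (a * m) = y
    have : a * m = b * n⁻¹ := by
      have : m = a⁻¹ * b * n⁻¹ := by rw [← hmn]; group
      rw [this]; group
    have h1 : QuotientGroup.mk' N n⁻¹ = 1 := (QuotientGroup.eq_one_iff n⁻¹).mpr (inv_mem hn)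
    rw [this, map_mul, h1, mul_one, hb]

/-- A finite non-cyclic abelian `p`-group is the union of `p + 1` proper subgroups,
but not the union of any `p` proper subgroups. -/
theorem covering_number_of_noncyclic_abelian_p_group (p : ℕ) (hp : p.Prime)
    (A : Type*) [CommGroup A] [Finite A] (hcard : ∃ k : ℕ, Nat.card A = p ^ k)
    (hnc : ¬ IsCyclic A) :
    (∃ f : Fin (p + 1) → Subgroup A, (∀ i, f i ≠ ⊤) ∧ ∀ x : A, ∃ i, x ∈ f i) ∧
    ¬ ∃ f : Fin p → Subgroup A, (∀ i, f i ≠ ⊤) ∧ ∀ x : A, ∃ i, x ∈ f i := by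
  obtain ⟨k, hk⟩ := hcard
  haveI : Fact p.Prime := ⟨hp⟩
  haveI : NeZero p := ⟨hp.pos.ne'⟩
  constructor
  · -- positive part
    obtain ⟨M, N, hM, hN, hMN⟩ := exists_two_coatoms hnc
    have hsup : M ⊔ N = ⊤ := coatoms_sup_eq_top hM hN hMN
    set φ := (QuotientGroup.mk' M).prod (QuotientGroup.mk' N) with hφdef
    have hφ : Function.Surjective φ := prod_mk_surjective hsup
    have hcM : Nat.card (A ⧸ M) = p := by
      rw [← Subgroup.index_eq_card]; exact coatom_index_eq hp hk hM
    have hcN : Nat.card (A ⧸ N) = p := by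
      rw [← Subgroup.index_eq_card]; exact coatom_index_eq hp hk hN
    obtain ⟨b, hb⟩ := (isCyclic_of_prime_card hcM).exists_generator
    obtain ⟨c, hc⟩ := (isCyclic_of_prime_card hcN).exists_generator
    have hob : orderOf b = p := by
      rw [orderOf_eq_card_of_forall_mem_zpowers hb, hcM]
    have hoc : orderOf c = p := by
      rw [orderOf_eq_card_of_forall_mem_zpowers hc, hcN]
    set g : Fin (p + 1) → (A ⧸ M) × (A ⧸ N) :=
      fun i => if i.val < p then (b, c ^ i.val) else (1, c) with hgdef
    refine ⟨fun i => Subgroup.comap φ (zpowers (g i)), fun i => ?_, fun x => ?_⟩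
    · -- properness
      intro htop
      have hzt : zpowers (g i) = ⊤ := by
        rw [eq_top_iff']
        intro q
        obtain ⟨a, rfl⟩ := hφ q
        exact Subgroup.mem_comap.mp ((eq_top_iff' _).mp htop a)
      have hbp : b ^ p = 1 := by rw [← hob, pow_orderOf_eq_one]
      have hcp : ∀ l : ℕ, (c ^ l) ^ p = 1 := fun l => by
        rw [← pow_mul, mul_comm, pow_mul, ← hoc, pow_orderOf_eq_one, one_pow]
      have hpow : (g i) ^ p = 1 := by
        rw [hgdef]
        simp only
        split
        · exact Prod.mk_eq_one.mpr ⟨hbp, hcp _⟩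
        · exact Prod.mk_eq_one.mpr ⟨one_pow p, by rw [← pow_one c] at hoc ⊢; exact hcp 1⟩
      have hdvd : orderOf (g i) ∣ p := orderOf_dvd_of_pow_eq_one hpow
      have hcz : Nat.card (zpowers (g i)) = p * p := by
        rw [hzt, Subgroup.card_top, Nat.card_prod, hcM, hcN]
      rw [Nat.card_zpowers] at hcz
      rw [hcz] at hdvd
      have hle := Nat.le_of_dvd hp.pos hdvd
      nlinarith [hp.two_le]
    · -- covering
      obtain ⟨m, hm'⟩ := hb (φ x).1
      obtain ⟨n, hn'⟩ := hc (φ x).2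
      have hm : b ^ m = (φ x).1 := hm'
      have hn : c ^ n = (φ x).2 := hn'
      by_cases h0 : (m : ZMod p) = 0
      · refine ⟨⟨p, lt_add_one p⟩, Subgroup.mem_comap.mpr ?_⟩
        have hg : g ⟨p, lt_add_one p⟩ = (1, c) := by simp [hgdef]
        rw [hg]
        refine mem_zpowers_iff.mpr ⟨n, ?_⟩
        have h1 : (φ x).1 = 1 := by
          rw [← hm, (zpow_eq_zpow_iff_zmod hob m 0).mpr (by simpa using h0), zpow_zero]
        refine Prod.ext ?_ ?_
        · show (1 : A ⧸ M) ^ n = (φ x).1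
          rw [one_zpow, h1]
        · exact hn
      · set j := ((n : ZMod p) * (m : ZMod p)⁻¹).val with hj
        have hjp : j < p := ZMod.val_lt _
        refine ⟨⟨j, Nat.lt_succ_of_lt hjp⟩, Subgroup.mem_comap.mpr ?_⟩
        have hg : g ⟨j, Nat.lt_succ_of_lt hjp⟩ = (b, c ^ j) := by simp [hgdef, hjp]
        rw [hg]
        refine mem_zpowers_iff.mpr ⟨m, ?_⟩
        have hsnd : (c ^ j) ^ m = (φ x).2 := by
          rw [← zpow_natCast c j, ← zpow_mul, ← hn]
          apply (zpow_eq_zpow_iff_zmod hoc _ _).mpr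
          push_cast
          rw [ZMod.natCast_val, ZMod.cast_id]
          rw [mul_assoc, inv_mul_cancel₀ h0, mul_one]
        refine Prod.ext ?_ ?_
        · show b ^ m = (φ x).1
          exact hm
        · exact hsnd
  · -- negative part
    rintro ⟨f, hne, hcov⟩
    classical
    haveI : Fintype A := Fintype.ofFinite A
    have hnt : Nontrivial A := by
      by_contra hs
      haveI : Subsingleton A := not_nontrivial_iff_subsingleton.mp hs
      exact hnc isCyclic_of_subsingleton
    have h2card : 1 < Nat.card A := Nat.card_eq_fintype_card (α := A) ▸ Fintype.one_lt_card_iff_nontrivial.mpr hnt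
    have hk1 : 1 ≤ k := by
      rcases Nat.eq_zero_or_pos k with h | h
      · rw [h, pow_zero] at hk; omega
      · exact h
    have hbound : ∀ i, Nat.card (f i) ≤ p ^ (k - 1) := by
      intro i
      have hdvd : Nat.card (f i) ∣ p ^ k := hk ▸ Subgroup.card_subgroup_dvd_card (f i)
      obtain ⟨j, hjk, hje⟩ := (Nat.dvd_prime_pow hp).mp hdvd
      have hjne : j ≠ k := by
        intro hjeq
        exact hne i (Subgroup.eq_top_of_card_eq (f i) (by rw [hje, hjeq, ← hk]))
      rw [hje]
      exact Nat.pow_le_pow_right hp.pos (by omega)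
    set s : Fin p → Finset A := fun i => ((f i : Set A).toFinset).erase 1 with hs
    have hsub : Finset.univ.erase (1 : A) ⊆ Finset.univ.biUnion s := by
      intro a ha
      obtain ⟨i, hi⟩ := hcov a
      exact Finset.mem_biUnion.mpr ⟨i, Finset.mem_univ i,
        Finset.mem_erase.mpr ⟨(Finset.mem_erase.mp ha).1, Set.mem_toFinset.mpr hi⟩⟩
    have hcard_s : ∀ i, (s i).card ≤ p ^ (k - 1) - 1 := by
      intro i
      have h1m : (1 : A) ∈ (f i : Set A).toFinset := Set.mem_toFinset.mpr (f i).one_mem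
      have hc : ((f i : Set A).toFinset).card = Nat.card (f i) := by
        rw [Set.toFinset_card, Nat.card_eq_fintype_card]
        exact Fintype.card_congr (Equiv.refl _)
      rw [hs]
      simp only
      rw [Finset.card_erase_of_mem h1m, hc]
      exact Nat.sub_le_sub_right (hbound i) 1
    have hbig : (Finset.univ.erase (1 : A)).card ≤ p * (p ^ (k - 1) - 1) := by
      calc (Finset.univ.erase (1 : A)).card ≤ (Finset.univ.biUnion s).card :=
              Finset.card_le_card hsub
        _ ≤ ∑ i, (s i).card := Finset.card_biUnion_le
        _ ≤ ∑ _i : Fin p, (p ^ (k - 1) - 1) := Finset.sum_le_sum (fun i _ => hcard_s i)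
        _ = p * (p ^ (k - 1) - 1) := by
              rw [Finset.sum_const, Finset.card_univ, Fintype.card_fin, smul_eq_mul]
    have hA : (Finset.univ.erase (1 : A)).card = p ^ k - 1 := by
      rw [Finset.card_erase_of_mem (Finset.mem_univ 1), Finset.card_univ,
        ← Nat.card_eq_fintype_card, hk]
    obtain ⟨k', rfl⟩ : ∃ k', k = k' + 1 := ⟨k - 1, by omega⟩
    have hP1 : 1 ≤ p ^ k' := Nat.one_le_pow _ _ hp.pos
    obtain ⟨Q, hQ⟩ : ∃ Q, p ^ k' = Q + 1 := ⟨p ^ k' - 1, by omega⟩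
    rw [hA] at hbig
    have hk1' : (k' + 1) - 1 = k' := rfl
    rw [hk1', hQ] at hbig
    have hsimp : Q + 1 - 1 = Q := rfl
    rw [hsimp] at hbig
    have hpow : p ^ (k' + 1) = p * (Q + 1) := by rw [pow_succ, hQ]; ring
    rw [hpow] at hbig
    have e1 : p * (Q + 1) = p * Q + p := by ring
    have e2 : p * (Q + 1) ≥ p := by nlinarith
    have := hp.two_le
    omega
end

section
/- Let A and B be finite rings whose cardinalities are coprime, and let n be a natural number. Then the product ring A × B is the union of n proper two-sided ideals if and only if A is the union of at most n proper two-sided ideals or B is the union of at most n proper two-sided ideals. -/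
lemma split_left {G H : Type*} [AddGroup G] [AddGroup H] [Finite G] [Finite H]
    (hcop : Nat.Coprime (Nat.card G) (Nat.card H)) (S : AddSubgroup (G × H))
    {a : G} {b : H} (h : (a, b) ∈ S) : ((a, (0:H)) ∈ S) := by
  set d := Nat.card G with hd
  set k := Nat.card H with hk
  have hbez : (1 : ℤ) = d * Nat.gcdA d k + k * Nat.gcdB d k := by
    have h2 := Nat.gcd_eq_gcd_ab d k
    rw [hcop] at h2
    exact_mod_cast h2
  set c : ℤ := (k : ℤ) * Nat.gcdB d k with hc
  have h1 : c • a = a := by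
    have hda : (d : ℤ) • a = 0 := by
      rw [natCast_zsmul]; exact card_nsmul_eq_zero'
    have hceq : c = 1 - Nat.gcdA d k * (d : ℤ) := by rw [hc]; linarith [hbez]
    rw [hceq, sub_zsmul, one_zsmul, mul_zsmul, hda, zsmul_zero]; simp
  have h2 : c • b = 0 := by
    have hkb : (k : ℤ) • b = 0 := by
      rw [natCast_zsmul]; exact card_nsmul_eq_zero'
    rw [hc, mul_comm, mul_zsmul, hkb, zsmul_zero]
  have : c • (a, b) = (a, (0:H)) := by
    rw [Prod.ext_iff]
    constructor
    · show c • a = a; exact h1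
    · show c • b = 0; exact h2
  rw [← this]
  exact S.zsmul_mem h c

lemma split_right {G H : Type*} [AddGroup G] [AddGroup H] [Finite G] [Finite H]
    (hcop : Nat.Coprime (Nat.card G) (Nat.card H)) (S : AddSubgroup (G × H))
    {a : G} {b : H} (h : (a, b) ∈ S) : (((0:G), b) ∈ S) := by
  have h1 := split_left hcop S h
  have h2 := S.sub_mem h h1
  simpa using h2

section Main

set_option linter.unusedSectionVars false

variable {A B : Type*} [NonUnitalRing A] [NonUnitalRing B] [Finite A] [Finite B]

lemma proj_fst_ideal (S : AddSubgroup (A × B)) (hS : IsTwoSidedIdeal S) :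
    IsTwoSidedIdeal (S.map (AddMonoidHom.fst A B)) := by
  constructor
  · rintro r x hx
    obtain ⟨⟨x', y⟩, hxy, rfl⟩ := hx
    have : ((r, (0:B)) * (x', y)) ∈ S := hS.1 (r, 0) hxy
    exact ⟨(r * x', 0 * y), this, rfl⟩
  · rintro r x hx
    obtain ⟨⟨x', y⟩, hxy, rfl⟩ := hx
    have : ((x', y) * (r, (0:B))) ∈ S := hS.2 (r, 0) hxy
    exact ⟨(x' * r, y * 0), this, rfl⟩

lemma proj_snd_ideal (S : AddSubgroup (A × B)) (hS : IsTwoSidedIdeal S) :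
    IsTwoSidedIdeal (S.map (AddMonoidHom.snd A B)) := by
  constructor
  · rintro r x hx
    obtain ⟨⟨y, x'⟩, hxy, rfl⟩ := hx
    have : (((0:A), r) * (y, x')) ∈ S := hS.1 (0, r) hxy
    exact ⟨(0 * y, r * x'), this, rfl⟩
  · rintro r x hx
    obtain ⟨⟨y, x'⟩, hxy, rfl⟩ := hx
    have : ((y, x') * ((0:A), r)) ∈ S := hS.2 (0, r) hxy
    exact ⟨(y * 0, x' * r), this, rfl⟩

lemma proper_proj (hcop : Nat.Coprime (Nat.card A) (Nat.card B))
    (S : AddSubgroup (A × B)) (hS : S ≠ ⊤)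
    (hA : S.map (AddMonoidHom.fst A B) = ⊤) : S.map (AddMonoidHom.snd A B) ≠ ⊤ := by
  intro hB
  apply hS
  rw [AddSubgroup.eq_top_iff']
  rintro ⟨a, b⟩
  have ha : a ∈ S.map (AddMonoidHom.fst A B) := hA ▸ AddSubgroup.mem_top a
  have hb : b ∈ S.map (AddMonoidHom.snd A B) := hB ▸ AddSubgroup.mem_top b
  obtain ⟨⟨a1, b1⟩, hm, rfl⟩ := ha
  obtain ⟨⟨a2, b2⟩, hm2, rfl⟩ := hb
  have := S.add_mem (split_left hcop S hm) (split_right hcop S hm2)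
  simpa using this

lemma cover_shrink {R : Type*} [NonUnitalRing R] (n : ℕ) (g : Fin n → AddSubgroup R)
    (hg : ∀ i, IsTwoSidedIdeal (g i))
    (hcov : ∀ x : R, ∃ i, x ∈ g i ∧ g i ≠ ⊤) :
    ∃ m ≤ n, ∃ f : Fin m → AddSubgroup R,
      (∀ i, IsTwoSidedIdeal (f i) ∧ f i ≠ ⊤) ∧ ∀ x : R, ∃ i, x ∈ f i := by
  classical
  obtain ⟨i0, _, hi0⟩ := hcov 0
  refine ⟨n, le_rfl, fun i => if g i = ⊤ then g i0 else g i, fun i => ?_, fun x => ?_⟩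
  · by_cases h : g i = ⊤ <;> simp [h, hg i, hg i0, hi0]
  · obtain ⟨i, hx, hne⟩ := hcov x
    exact ⟨i, by simp [hne, hx]⟩

lemma lift_cover {m n : ℕ} (hm : m ≤ n) (f : Fin m → AddSubgroup A)
    (hf : ∀ i, IsTwoSidedIdeal (f i) ∧ f i ≠ ⊤) (hcov : ∀ x : A, ∃ i, x ∈ f i) :
    ∃ F : Fin n → AddSubgroup (A × B),
      (∀ i, IsTwoSidedIdeal (F i) ∧ F i ≠ ⊤) ∧ ∀ x : A × B, ∃ i, x ∈ F i := by
  classical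
  obtain ⟨i0, -⟩ := hcov 0
  set e : Fin n → Fin m := fun i => if h : (i : ℕ) < m then ⟨i, h⟩ else i0 with he
  refine ⟨fun i => (f (e i)).prod ⊤, fun i => ⟨⟨?_, ?_⟩, ?_⟩, fun x => ?_⟩
  · rintro r x hx
    rw [AddSubgroup.mem_prod] at hx ⊢
    exact ⟨(hf (e i)).1.1 r.1 hx.1, trivial⟩
  · rintro r x hx
    rw [AddSubgroup.mem_prod] at hx ⊢
    exact ⟨(hf (e i)).1.2 r.1 hx.1, trivial⟩
  · intro htop
    apply (hf (e i)).2
    rw [AddSubgroup.eq_top_iff']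
    intro a
    have htop' : (f (e i)).prod ⊤ = ⊤ := htop
    have : (a, (0:B)) ∈ (f (e i)).prod ⊤ := by rw [htop']; trivial
    exact ((AddSubgroup.mem_prod).1 this).1
  · obtain ⟨j, hj⟩ := hcov x.1
    refine ⟨⟨j, lt_of_lt_of_le j.2 hm⟩, ?_⟩
    have hej : e ⟨j, lt_of_lt_of_le j.2 hm⟩ = j := by
      rw [he]; simp
    rw [AddSubgroup.mem_prod, hej]
    exact ⟨hj, trivial⟩

lemma lift_cover_right {m n : ℕ} (hm : m ≤ n) (f : Fin m → AddSubgroup B)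
    (hf : ∀ i, IsTwoSidedIdeal (f i) ∧ f i ≠ ⊤) (hcov : ∀ x : B, ∃ i, x ∈ f i) :
    ∃ F : Fin n → AddSubgroup (A × B),
      (∀ i, IsTwoSidedIdeal (F i) ∧ F i ≠ ⊤) ∧ ∀ x : A × B, ∃ i, x ∈ F i := by
  classical
  obtain ⟨i0, -⟩ := hcov 0
  set e : Fin n → Fin m := fun i => if h : (i : ℕ) < m then ⟨i, h⟩ else i0 with he
  refine ⟨fun i => (⊤ : AddSubgroup A).prod (f (e i)), fun i => ⟨⟨?_, ?_⟩, ?_⟩, fun x => ?_⟩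
  · rintro r x hx
    rw [AddSubgroup.mem_prod] at hx ⊢
    exact ⟨trivial, (hf (e i)).1.1 r.2 hx.2⟩
  · rintro r x hx
    rw [AddSubgroup.mem_prod] at hx ⊢
    exact ⟨trivial, (hf (e i)).1.2 r.2 hx.2⟩
  · intro htop
    apply (hf (e i)).2
    rw [AddSubgroup.eq_top_iff']
    intro b
    have htop' : (⊤ : AddSubgroup A).prod (f (e i)) = ⊤ := htop
    have : ((0:A), b) ∈ (⊤ : AddSubgroup A).prod (f (e i)) := by rw [htop']; trivial
    exact ((AddSubgroup.mem_prod).1 this).2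
  · obtain ⟨j, hj⟩ := hcov x.2
    refine ⟨⟨j, lt_of_lt_of_le j.2 hm⟩, ?_⟩
    have hej : e ⟨j, lt_of_lt_of_le j.2 hm⟩ = j := by
      rw [he]; simp
    rw [AddSubgroup.mem_prod, hej]
    exact ⟨trivial, hj⟩

end Main

/-- For finite rings `A`, `B` of coprime cardinality, the product ring `A × B` is
the union of `n` proper two-sided ideals if and only if `A` or `B` is the union of
at most `n` proper two-sided ideals. -/
theorem prod_ring_ideal_cover_iff (A B : Type*) [NonUnitalRing A] [NonUnitalRing B]
    [Finite A] [Finite B] (hcop : Nat.Coprime (Nat.card A) (Nat.card B)) (n : ℕ) :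
    (∃ f : Fin n → AddSubgroup (A × B),
      (∀ i, IsTwoSidedIdeal (f i) ∧ f i ≠ ⊤) ∧ ∀ x : A × B, ∃ i, x ∈ f i) ↔
    ((∃ m ≤ n, ∃ f : Fin m → AddSubgroup A,
        (∀ i, IsTwoSidedIdeal (f i) ∧ f i ≠ ⊤) ∧ ∀ x : A, ∃ i, x ∈ f i) ∨
      (∃ m ≤ n, ∃ f : Fin m → AddSubgroup B,
        (∀ i, IsTwoSidedIdeal (f i) ∧ f i ≠ ⊤) ∧ ∀ x : B, ∃ i, x ∈ f i)) := by
  constructor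
  · rintro ⟨f, hf, hcov⟩
    by_cases hA : ∀ a : A, ∃ i, a ∈ (f i).map (AddMonoidHom.fst A B) ∧
        (f i).map (AddMonoidHom.fst A B) ≠ ⊤
    · exact Or.inl (cover_shrink n _ (fun i => proj_fst_ideal (f i) (hf i).1) hA)
    · right
      push_neg at hA
      obtain ⟨a, ha⟩ := hA
      apply cover_shrink n (fun i => (f i).map (AddMonoidHom.snd A B))
        (fun i => proj_snd_ideal (f i) (hf i).1)
      intro b
      obtain ⟨i, hi⟩ := hcov (a, b)
      have hafst : a ∈ (f i).map (AddMonoidHom.fst A B) := ⟨(a, b), hi, rfl⟩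
      have hbsnd : b ∈ (f i).map (AddMonoidHom.snd A B) := ⟨(a, b), hi, rfl⟩
      have hFA : (f i).map (AddMonoidHom.fst A B) = ⊤ := ha i hafst
      exact ⟨i, hbsnd, proper_proj hcop (f i) (hf i).2 hFA⟩
  · rintro (⟨m, hm, f, hf, hcov⟩ | ⟨m, hm, f, hf, hcov⟩)
    · exact lift_cover hm f hf hcov
    · exact lift_cover_right hm f hf hcov
end
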